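/- Let D be a digraph obtained from a tournament by deleting the edges of two disjoint stars. If every missing edge of D has positive in-degree and positive out-degree in the dependency digraph Δ of D, then D has a vertex with the second neighborhood property. -/

import Mathlib

variable {V : Type*}

/-- Out-neighborhood of `v`. -/
def Nplus (A : V → V → Prop) (v : V) : Set V := {u | A v u}

/-- In-neighborhood of `v`. -/
def Nminus (A : V → V → Prop) (v : V) : Set V := {u | A u v}

/-- Second out-neighborhood: vertices at directed distance exactly 2 from `v`. -/
def Npp (A : V → V → Prop) (v : V) : Set V :=
  {u | u ≠ v ∧ ¬ A v u ∧ ∃ w, A v w ∧ A w u}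

/-- The second neighborhood property. -/
def SNP (A : V → V → Prop) (v : V) : Prop := (Nplus A v).ncard ≤ (Npp A v).ncard

/-- A digraph (given by its arc relation) has no digons: no 2-cycles (this also rules out loops when stated for `u = v`). -/
def NoDigons (A : V → V → Prop) : Prop := ∀ u v, ¬ (A u v ∧ A v u)

/-- A tournament: an orientation of a complete graph. -/
def IsTournament (A : V → V → Prop) : Prop :=
  (∀ v, ¬ A v v) ∧ ∀ u v : V, u ≠ v → (A u v ↔ ¬ A v u)

/-- `u v` is a missing edge: distinct and non-adjacent. -/
def MissingEdge (A : V → V → Prop) (u v : V) : Prop := u ≠ v ∧ ¬ A u v ∧ ¬ A v u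

/-- `x₁y₁` loses to `x₂y₂` (with this labelling of endpoints). -/
def LosesAt (A : V → V → Prop) (x₁ y₁ x₂ y₂ : V) : Prop :=
  A x₁ x₂ ∧ ¬ A x₁ y₂ ∧ y₂ ∉ Npp A x₁ ∧ A y₁ y₂ ∧ ¬ A y₁ x₂ ∧ x₂ ∉ Npp A y₁

/-- The losing relation between (unordered) missing edges: the arcs of the dependency digraph. -/
def EdgeLoses (A : V → V → Prop) (e e' : Sym2 V) : Prop :=
  ∃ x₁ y₁ x₂ y₂, e = s(x₁, y₁) ∧ e' = s(x₂, y₂) ∧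
    MissingEdge A x₁ y₁ ∧ MissingEdge A x₂ y₂ ∧ LosesAt A x₁ y₁ x₂ y₂
section HT

attribute [local instance] Classical.propDecidable

variable {V : Type*}

namespace HTAux

variable (A : V → V → Prop) (w : V → ℕ)

/-- weight of out-neighbors of `a` within list `l` -/
noncomputable def fwd (a : V) (l : List V) : ℕ :=
  (l.map (fun b => if A a b then w b else 0)).sum

/-- weight of in-neighbors of `a` within list `l` -/
noncomputable def bwd (a : V) (l : List V) : ℕ :=
  (l.map (fun b => if A b a then w b else 0)).sum

/-- total weighted forward-arc count of an ordering -/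
noncomputable def FF : List V → ℕ
  | [] => 0
  | a :: l => w a * fwd A w a l + FF l

/-- cross term -/
noncomputable def XX (u v : List V) : ℕ :=
  (u.map (fun a => w a * fwd A w a v)).sum

lemma fwd_append (a : V) (u v : List V) :
    fwd A w a (u ++ v) = fwd A w a u + fwd A w a v := by
  simp [fwd]

lemma fwd_cons (a c : V) (l : List V) :
    fwd A w a (c :: l) = (if A a c then w c else 0) + fwd A w a l := by
  simp [fwd]

lemma bwd_cons (a c : V) (l : List V) :
    bwd A w a (c :: l) = (if A c a then w c else 0) + bwd A w a l := by
  simp [bwd]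

lemma XX_cons (a : V) (u v : List V) :
    XX A w (a :: u) v = w a * fwd A w a v + XX A w u v := by
  simp [XX]

lemma FF_append (u v : List V) : FF A w (u ++ v) = FF A w u + FF A w v + XX A w u v := by
  induction u with
  | nil => simp [FF, XX]
  | cons a u ih =>
    simp only [List.cons_append, FF, ih, fwd_append, XX_cons, List.append_eq]
    ring

lemma XX_append_right (u v v' : List V) :
    XX A w u (v ++ v') = XX A w u v + XX A w u v' := by
  induction u with
  | nil => simp [XX]
  | cons a u ih => simp only [XX_cons, ih, fwd_append]; ring

lemma XX_singleton_right (s : List V) (c : V) :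
    XX A w s [c] = w c * bwd A w c s := by
  induction s with
  | nil => simp [XX, bwd]
  | cons a s ih =>
    simp only [XX_cons, ih, bwd_cons, fwd]
    simp only [List.map_cons, List.map_nil, List.sum_cons, List.sum_nil]
    split_ifs <;> ring

lemma FF_single (c : V) : FF A w [c] = 0 := by
  simp [FF, fwd]

lemma XX_single_left (c : V) (v : List V) : XX A w [c] v = w c * fwd A w c v := by
  simp [XX]

lemma fwd_nil (a : V) : fwd A w a [] = 0 := by simp [fwd]

lemma bwd_nil (a : V) : bwd A w a [] = 0 := by simp [bwd]

lemma XX_nil_right (u : List V) : XX A w u [] = 0 := by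
  simp [XX, fwd_nil]

/-- The relocation identity. -/
lemma move_eq (p s t : List V) (c : V) :
    FF A w (p ++ [c] ++ s ++ t) + w c * bwd A w c s
      = FF A w (p ++ s ++ [c] ++ t) + w c * fwd A w c s := by
  have e1 : p ++ [c] ++ s ++ t = p ++ ([c] ++ (s ++ t)) := by simp
  have e2 : p ++ s ++ [c] ++ t = p ++ (s ++ ([c] ++ t)) := by simp
  rw [e1, e2]
  simp only [FF_append, XX_append_right, XX_singleton_right, XX_single_left, fwd_append,
    FF_single, XX_nil_right, fwd_nil, bwd_nil]
  ring

/-- From maximality: moving `c` to the left past `s` does not increase the count. -/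
lemma move_le {l : List V} (hmax : ∀ l', l'.Perm l → FF A w l' ≤ FF A w l)
    (p s t : List V) (c : V) (h : l = p ++ s ++ [c] ++ t) (hc : 0 < w c) :
    fwd A w c s ≤ bwd A w c s := by
  have hperm : (p ++ [c] ++ s ++ t).Perm l := by
    rw [h]
    have base : ([c] ++ s).Perm (s ++ [c]) := List.perm_append_comm
    have h3 : (p ++ (([c] ++ s) ++ t)).Perm (p ++ ((s ++ [c]) ++ t)) :=
      ((base.append_right t).append_left p)
    have e1 : p ++ [c] ++ s ++ t = p ++ (([c] ++ s) ++ t) := by simp [List.append_assoc]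
    have e2 : p ++ s ++ [c] ++ t = p ++ ((s ++ [c]) ++ t) := by simp [List.append_assoc]
    rw [e1, e2]; exact h3
  have hle := hmax _ hperm
  have heq := move_eq A w p s t c
  rw [h] at hle
  have h3 : w c * fwd A w c s ≤ w c * bwd A w c s := by linarith
  exact Nat.le_of_mul_le_mul_left h3 hc

end HTAux

open HTAux

/-- split a list at its first element satisfying `P` -/
lemma list_split_first {P : V → Prop} (l : List V) :
    (∀ u ∈ l, ¬ P u) ∨ ∃ s c t, l = s ++ c :: t ∧ P c ∧ ∀ u ∈ s, ¬ P u := by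
  induction l with
  | nil => left; simp
  | cons a l ih =>
    by_cases ha : P a
    · right; exact ⟨[], a, l, by simp, ha, by simp⟩
    · rcases ih with h | ⟨s, c, t, rfl, hc, hs⟩
      · left; intro u hu; rcases List.mem_cons.mp hu with rfl | hu
        · exact ha
        · exact h u hu
      · right; exact ⟨a :: s, c, t, by simp, hc, by
          intro u hu; rcases List.mem_cons.mp hu with rfl | hu
          · exact ha
          · exact hs u hu⟩

/-- Weighted Havet–Thomassé: the feed vertex of a maximum-weight order of a finite
tournament has the weighted second neighborhood property. -/
theorem weighted_HT [Fintype V] (A : V → V → Prop) (w : V → ℕ)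
    (S : Finset V) (hne : S.Nonempty)
    (hirr : ∀ u ∈ S, ¬ A u u)
    (htot : ∀ u ∈ S, ∀ v ∈ S, u ≠ v → A u v ∨ A v u)
    (hasym : ∀ u v : V, A u v → ¬ A v u)
    (hw : ∀ u, 0 < w u) :
    ∃ f ∈ S,
      (∑ u ∈ S.filter (fun u => A f u), w u)
        ≤ ∑ u ∈ S.filter (fun u => u ≠ f ∧ ¬ A f u ∧ ∃ v ∈ S, A f v ∧ A v u), w u := by
  classical
  -- get a maximum order
  set cands := S.toList.permutations with hcands
  have hmemcands : S.toList ∈ cands := List.mem_permutations.mpr (List.Perm.refl _)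
  obtain ⟨m, hargm⟩ : ∃ m, m ∈ cands.argmax (FF A w) := by
    cases h : cands.argmax (FF A w) with
    | none => exact absurd (List.argmax_eq_none.mp h) (List.ne_nil_of_mem hmemcands)
    | some m => exact ⟨m, by simp [h]⟩
  have hmemm : m ∈ cands := List.argmax_mem hargm
  have hmp : m.Perm S.toList := List.mem_permutations.mp hmemm
  have hmax : ∀ l', l'.Perm m → FF A w l' ≤ FF A w m := by
    intro l' hl'
    exact List.le_of_mem_argmax (List.mem_permutations.mpr (hl'.trans hmp)) hargm
  have hnodup : m.Nodup := (hmp.symm).nodup (S.nodup_toList)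
  have hmemS : ∀ u ∈ m, u ∈ S := fun u hu => (Finset.mem_toList).mp (hmp.mem_iff.mp hu)
  have hSm : ∀ u ∈ S, u ∈ m := fun u hu => (hmp.mem_iff).mpr ((Finset.mem_toList).mpr hu)
  -- split off the feed vertex
  obtain ⟨v0, hv0⟩ := hne
  have hmne : m ≠ [] := List.ne_nil_of_mem (hSm v0 hv0)
  rcases List.eq_nil_or_concat m with rfl | ⟨l', f, hconc⟩
  · exact absurd rfl hmne
  rw [List.concat_eq_append] at hconc
  have hfS : f ∈ S := hmemS f (by rw [hconc]; simp)
  have hfnl' : f ∉ l' := by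
    have := hconc ▸ hnodup
    exact fun hf => (List.nodup_append'.mp this).2.2 hf (by simp)
  have hl'mem : ∀ u ∈ l', u ∈ S := fun u hu => hmemS u (by rw [hconc]; simp [hu])
  have hl'ne : ∀ u ∈ l', u ≠ f := fun u hu heq => hfnl' (heq ▸ hu)
  -- good / second / bad classification
  set G : V → Prop := fun u => A f u with hG
  set N : V → Prop := fun u => u ≠ f ∧ ¬ A f u ∧ ∃ v ∈ S, A f v ∧ A v u with hN
  set Bad : V → Prop := fun u => u ≠ f ∧ ¬ G u ∧ ¬ N u with hBad
  have htrich : ∀ u ∈ l', G u ∨ N u ∨ Bad u := by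
    intro u hu
    by_cases h1 : G u
    · exact Or.inl h1
    by_cases h2 : N u
    · exact Or.inr (Or.inl h2)
    exact Or.inr (Or.inr ⟨hl'ne u hu, h1, h2⟩)
  have hGnotN : ∀ u, G u → ¬ N u := fun u hg hn => hn.2.1 hg
  have hbadG : ∀ b ∈ S, Bad b → ∀ g ∈ S, G g → A b g := by
    intro b hbS hb g hgS hg
    have hngb : ¬ A g b := by
      intro hgb
      exact hb.2.2 ⟨hb.1, hb.2.1, g, hgS, hg, hgb⟩
    have hne' : b ≠ g := by
      intro h; subst h; exact hb.2.1 hg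
    rcases htot b hbS g hgS hne' with h | h
    · exact h
    · exact absurd h hngb
  -- weighted counts
  set GW : List V → ℕ := fun l => (l.map (fun u => if G u then w u else 0)).sum with hGW
  set NW : List V → ℕ := fun l => (l.map (fun u => if N u then w u else 0)).sum with hNW
  have GW_append : ∀ u v : List V, GW (u ++ v) = GW u + GW v := by intro u v; simp [hGW]
  have NW_append : ∀ u v : List V, NW (u ++ v) = NW u + NW v := by intro u v; simp [hNW]
  -- main claim by strong induction on suffixes
  have claimC : ∀ n (l₂ l₁ : List V), l₂.length ≤ n → l' = l₁ ++ l₂ → GW l₂ ≤ NW l₂ := by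
    intro n
    induction n with
    | zero =>
      intro l₂ l₁ hlen _
      have : l₂ = [] := List.length_eq_zero_iff.mp (Nat.le_zero.mp hlen)
      simp [this, hGW, hNW]
    | succ n ih =>
      intro l₂ l₁ hlen heq
      have hl₂mem : ∀ u ∈ l₂, u ∈ l' := fun u hu => heq ▸ (List.mem_append.mpr (Or.inr hu))
      rcases list_split_first (P := Bad) l₂ with hnone | ⟨s, c, t, hsplit, hBc, hsgood⟩
      · -- base: move f left past l₂
        have hdec : m = l₁ ++ l₂ ++ [f] ++ [] := by rw [hconc, heq]; simp
        have hmv := move_le A w hmax l₁ l₂ [] f hdec (hw f)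
        have h1 : GW l₂ = fwd A w f l₂ := by
          simp only [hGW, fwd, hG]
        have h2 : bwd A w f l₂ = NW l₂ := by
          simp only [hNW, bwd]
          congr 1
          apply List.map_congr_left
          intro u hu
          rcases htrich u (hl₂mem u hu) with h | h | h
          · have h1' : ¬ A u f := hasym f u h
            have h2' : ¬ N u := hGnotN u h
            rw [if_neg h1', if_neg h2']
          · have huf : A u f := by
              rcases htot u (hl'mem u (hl₂mem u hu)) f hfS h.1 with hh | hh
              · exact hh
              · exact absurd hh h.2.1
            rw [if_pos huf, if_pos h]
          · exact absurd h (hnone u hu)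
        omega
      · -- step: peel first bad element c
        subst hsplit
        have hcS : c ∈ S := hl'mem c (hl₂mem c (by simp))
        have hsmem : ∀ u ∈ s, u ∈ S := fun u hu => hl'mem u (hl₂mem u (by simp [hu]))
        have hdec : m = l₁ ++ s ++ [c] ++ (t ++ [f]) := by
          rw [hconc, heq]; simp
        have hmv := move_le A w hmax l₁ s (t ++ [f]) c hdec (hw c)
        have hGle : GW s ≤ fwd A w c s := by
          apply List.sum_le_sum
          intro u hu
          by_cases hg : G u
          · have hcu : A c u := hbadG c hcS hBc u (hsmem u hu) hg
            rw [if_pos hg, if_pos hcu]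
          · rw [if_neg hg]; exact Nat.zero_le _
        have hNle : bwd A w c s ≤ NW s := by
          apply List.sum_le_sum
          intro u hu
          by_cases huc : A u c
          · have hNu : N u := by
              rcases htrich u (hl₂mem u (by simp [hu])) with h | h | h
              · exact absurd huc (hasym c u (hbadG c hcS hBc u (hsmem u hu) h))
              · exact h
              · exact absurd h (hsgood u hu)
            rw [if_pos huc, if_pos hNu]
          · rw [if_neg huc]; exact Nat.zero_le _
        have hih : GW t ≤ NW t := by
          apply ih t (l₁ ++ s ++ [c])
          · have : (s ++ c :: t).length ≤ n + 1 := hlen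
            simp at this ⊢; omega
          · rw [heq]; simp
        have hGc : ¬ G c := hBc.2.1
        have hNc : ¬ N c := hBc.2.2
        have e1 : GW (s ++ c :: t) = GW s + GW t := by
          rw [show s ++ c :: t = s ++ [c] ++ t by simp, GW_append, GW_append]
          simp [hGW, hGc]
        have e2 : NW (s ++ c :: t) = NW s + NW t := by
          rw [show s ++ c :: t = s ++ [c] ++ t by simp, NW_append, NW_append]
          simp [hNW, hNc]
        omega
  have hfinal : GW l' ≤ NW l' := claimC l'.length l' [] le_rfl (by simp)
  -- convert to Finset sums
  refine ⟨f, hfS, ?_⟩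
  have htofin : l'.toFinset = S.erase f := by
    ext u
    simp only [List.mem_toFinset, Finset.mem_erase]
    constructor
    · intro hu; exact ⟨hl'ne u hu, hl'mem u hu⟩
    · intro ⟨hne', huS⟩
      have : u ∈ m := hSm u huS
      rw [hconc] at this
      rcases List.mem_append.mp this with h | h
      · exact h
      · simp at h; exact absurd h hne'
  have hnl' : l'.Nodup := by
    have := hconc ▸ hnodup
    exact (List.nodup_append.mp this).1
  have hGW' : GW l' = ∑ u ∈ S.filter (fun u => A f u), w u := by
    rw [Finset.sum_filter]
    have : ∑ u ∈ S, (if A f u then w u else 0)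
        = (if A f f then w f else 0) + ∑ u ∈ S.erase f, (if A f u then w u else 0) :=
      (Finset.add_sum_erase S _ hfS).symm
    rw [this]
    have hff : ¬ A f f := hirr f hfS
    rw [if_neg hff, zero_add, ← htofin, List.sum_toFinset _ hnl']
  have hNW' : NW l' = ∑ u ∈ S.filter (fun u => u ≠ f ∧ ¬ A f u ∧ ∃ v ∈ S, A f v ∧ A v u), w u := by
    rw [Finset.sum_filter]
    have : ∑ u ∈ S, (if u ≠ f ∧ ¬ A f u ∧ ∃ v ∈ S, A f v ∧ A v u then w u else 0)
        = (if f ≠ f ∧ ¬ A f f ∧ ∃ v ∈ S, A f v ∧ A v f then w f else 0)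
          + ∑ u ∈ S.erase f, (if u ≠ f ∧ ¬ A f u ∧ ∃ v ∈ S, A f v ∧ A v u then w u else 0) :=
      (Finset.add_sum_erase S _ hfS).symm
    rw [this]
    rw [if_neg (by simp), zero_add, ← htofin, List.sum_toFinset _ hnl']
  rw [← hGW', ← hNW']
  exact hfinal

end HT

section App

variable {V : Type*}

lemma miss_symm {A : V → V → Prop} {u v : V} (h : MissingEdge A u v) : MissingEdge A v u :=
  ⟨h.1.symm, h.2.2, h.2.1⟩

lemma mem_Npp {A : V → V → Prop} {v u : V} :
    u ∈ Npp A v ↔ (u ≠ v ∧ ¬ A v u ∧ ∃ w, A v w ∧ A w u) := Iff.rfl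

lemma npp_avoid {A : V → V → Prop} {v u : V} (h : u ∉ Npp A v) (hne : u ≠ v)
    (hnvu : ¬ A v u) : ∀ w, A v w → ¬ A w u := by
  intro w h1 h2
  exact h ⟨hne, hnvu, w, h1, h2⟩

lemma extract_out {A : V → V → Prop} {u v : V} {e : Sym2 V}
    (h : EdgeLoses A s(u, v) e) :
    ∃ c d, MissingEdge A c d ∧ A u c ∧ ¬ A u d ∧ d ∉ Npp A u ∧
      A v d ∧ ¬ A v c ∧ c ∉ Npp A v := by
  obtain ⟨x₁, y₁, x₂, y₂, h1, _, _, hm2, hL⟩ := h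
  obtain ⟨hL1, hL2, hL3, hL4, hL5, hL6⟩ := hL
  rcases Sym2.eq_iff.mp h1 with ⟨rfl, rfl⟩ | ⟨rfl, rfl⟩
  · exact ⟨x₂, y₂, hm2, hL1, hL2, hL3, hL4, hL5, hL6⟩
  · exact ⟨y₂, x₂, miss_symm hm2, hL4, hL5, hL6, hL1, hL2, hL3⟩

lemma extract_in {A : V → V → Prop} {u v : V} {e : Sym2 V}
    (h : EdgeLoses A e s(u, v)) :
    ∃ c d, MissingEdge A c d ∧ A c u ∧ ¬ A c v ∧ v ∉ Npp A c ∧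
      A d v ∧ ¬ A d u ∧ u ∉ Npp A d := by
  obtain ⟨x₁, y₁, x₂, y₂, _, h2, hm1, _, hL⟩ := h
  obtain ⟨hL1, hL2, hL3, hL4, hL5, hL6⟩ := hL
  rcases Sym2.eq_iff.mp h2.symm with ⟨rfl, rfl⟩ | ⟨rfl, rfl⟩
  · exact ⟨x₁, y₁, hm1, hL1, hL2, hL3, hL4, hL5, hL6⟩
  · exact ⟨y₁, x₁, miss_symm hm1, hL4, hL5, hL6, hL1, hL2, hL3⟩

section Main

attribute [local instance] Classical.propDecidable

/-- The main lemma, assuming `A x y`. -/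
lemma main_lemma [Fintype V]
    (A : V → V → Prop) (hA : NoDigons A)
    (x y : V) (hxy : x ≠ y) (hxyArc : A x y)
    (hStar : ∀ u v, MissingEdge A u v → u = x ∨ v = x ∨ u = y ∨ v = y)
    (hDisj : ∀ v, ¬ (MissingEdge A v x ∧ MissingEdge A v y))
    (hxLeaf : ∃ a, MissingEdge A x a) (hyLeaf : ∃ b, MissingEdge A y b)
    (hIndeg : ∀ u v, MissingEdge A u v → ∃ e : Sym2 V, EdgeLoses A e s(u, v))
    (hOutdeg : ∀ u v, MissingEdge A u v → ∃ e : Sym2 V, EdgeLoses A s(u, v) e) :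
    ∃ v : V, SNP A v := by
  classical
  have hirr : ∀ u, ¬ A u u := fun u h => hA u u ⟨h, h⟩
  have hdig : ∀ u v, A u v → ¬ A v u := fun u v h h' => hA u v ⟨h, h'⟩
  have hnAyx : ¬ A y x := hdig x y hxyArc
  set Lx : Set V := {a | MissingEdge A x a} with hLxdef
  set Ly : Set V := {b | MissingEdge A y b} with hLydef
  have hLxmem : ∀ a, a ∈ Lx ↔ MissingEdge A x a := fun a => Iff.rfl
  have hLymem : ∀ b, b ∈ Ly ↔ MissingEdge A y b := fun b => Iff.rfl
  have hLxprop : ∀ a ∈ Lx, a ≠ x ∧ a ≠ y := by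
    intro a ha
    refine ⟨Ne.symm ha.1, ?_⟩
    rintro rfl; exact ha.2.1 hxyArc
  have hLyprop : ∀ b ∈ Ly, b ≠ x ∧ b ≠ y := by
    intro b hb
    refine ⟨?_, Ne.symm hb.1⟩
    rintro rfl; exact hb.2.2 hxyArc
  have hLxLy : ∀ u, u ∈ Lx → u ∈ Ly → False := by
    intro u h1 h2
    exact hDisj u ⟨miss_symm h1, miss_symm h2⟩
  -- classification of missing edges
  have hM : ∀ u v, MissingEdge A u v →
      (u = x ∧ v ∈ Lx) ∨ (v = x ∧ u ∈ Lx) ∨ (u = y ∧ v ∈ Ly) ∨ (v = y ∧ u ∈ Ly) := by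
    intro u v h
    rcases hStar u v h with rfl | rfl | rfl | rfl
    · exact Or.inl ⟨rfl, h⟩
    · exact Or.inr (Or.inl ⟨rfl, miss_symm h⟩)
    · exact Or.inr (Or.inr (Or.inl ⟨rfl, h⟩))
    · exact Or.inr (Or.inr (Or.inr ⟨rfl, miss_symm h⟩))
  have hadj2 : ∀ u v : V, u ≠ v → ¬ MissingEdge A u v → ¬ A u v → A v u := by
    intro u v hne hnm hn
    by_contra h
    exact hnm ⟨hne, hn, h⟩
  -- extraction of the four families of facts
  have H_E1 : ∀ a ∈ Lx, ¬ A a y ∧ y ∉ Npp A a ∧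
      ∃ d ∈ Ly, ¬ A x d ∧ d ∉ Npp A x ∧ A a d := by
    intro a ha
    obtain ⟨e, he⟩ := hOutdeg x a ha
    obtain ⟨c, d, hm, hAxc, hnAxd, hdN, hAad, hnAac, hcN⟩ := extract_out he
    rcases hM c d hm with ⟨hcx, hd⟩ | ⟨hdx, hc⟩ | ⟨hcy, hd⟩ | ⟨hdy, hc⟩
    · rw [hcx] at hAxc; exact absurd hAxc (hirr x)
    · rw [hdx] at hAad; exact absurd hAad ha.2.2
    · rw [hcy] at hnAac hcN; exact ⟨hnAac, hcN, d, hd, hnAxd, hdN, hAad⟩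
    · rw [hdy] at hnAxd; exact absurd hxyArc hnAxd
  have H_E2 : ∀ a ∈ Lx, A y a ∧ x ∉ Npp A y ∧
      ∃ c ∈ Ly, A c x ∧ ¬ A c a ∧ a ∉ Npp A c := by
    intro a ha
    obtain ⟨e, he⟩ := hIndeg x a ha
    obtain ⟨c, d, hm, hAcx, hnAca, haN, hAda, hnAdx, hxN⟩ := extract_in he
    rcases hM c d hm with ⟨hcx, hd⟩ | ⟨hdx, hc⟩ | ⟨hcy, hd⟩ | ⟨hdy, hc⟩
    · rw [hcx] at hAcx; exact absurd hAcx (hirr x)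
    · rw [hdx] at hAda; exact absurd hAda ha.2.1
    · rw [hcy] at hAcx; exact absurd hAcx hnAyx
    · rw [hdy] at hAda hxN; exact ⟨hAda, hxN, c, hc, hAcx, hnAca, haN⟩
  have H_E3 : ∀ b ∈ Ly, A b x ∧ x ∉ Npp A y ∧
      ∃ c ∈ Lx, A y c ∧ ¬ A b c ∧ c ∉ Npp A b := by
    intro b hb
    obtain ⟨e, he⟩ := hOutdeg y b hb
    obtain ⟨c, d, hm, hAyc, hnAyd, hdN, hAbd, hnAbc, hcN⟩ := extract_out he
    rcases hM c d hm with ⟨hcx, hd⟩ | ⟨hdx, hc⟩ | ⟨hcy, hd⟩ | ⟨hdy, hc⟩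
    · rw [hcx] at hAyc; exact absurd hAyc hnAyx
    · rw [hdx] at hAbd hdN; exact ⟨hAbd, hdN, c, hc, hAyc, hnAbc, hcN⟩
    · rw [hcy] at hAyc; exact absurd hAyc (hirr y)
    · rw [hdy] at hAbd; exact absurd hAbd hb.2.2
  have H_E4 : ∀ b ∈ Ly, ¬ A x b ∧ b ∉ Npp A x ∧
      ∃ d ∈ Lx, A d b ∧ ¬ A d y ∧ y ∉ Npp A d := by
    intro b hb
    obtain ⟨e, he⟩ := hIndeg y b hb
    obtain ⟨c, d, hm, hAcy, hnAcb, hbN, hAdb, hnAdy, hyN⟩ := extract_in he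
    rcases hM c d hm with ⟨hcx, hd⟩ | ⟨hdx, hc⟩ | ⟨hcy, hd⟩ | ⟨hdy, hc⟩
    · rw [hcx] at hnAcb hbN; exact ⟨hnAcb, hbN, d, hd, hAdb, hnAdy, hyN⟩
    · rw [hdx] at hnAdy; exact absurd hxyArc hnAdy
    · rw [hcy] at hAcy; exact absurd hAcy (hirr y)
    · rw [hdy] at hAdb; exact absurd hAdb hb.2.1
  obtain ⟨a₀, ha₀⟩ := hxLeaf
  have ha₀Lx : a₀ ∈ Lx := ha₀
  -- basic facts
  have hyLx : ∀ a ∈ Lx, A y a := fun a ha => (H_E2 a ha).1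
  have hnppya : ∀ a ∈ Lx, y ∉ Npp A a := fun a ha => (H_E1 a ha).2.1
  have hnAay : ∀ a ∈ Lx, ¬ A a y := fun a ha => (H_E1 a ha).1
  have hnAxb : ∀ b ∈ Ly, ¬ A x b := fun b hb => (H_E4 b hb).1
  have hnppxb : ∀ b ∈ Ly, b ∉ Npp A x := fun b hb => (H_E4 b hb).2.1
  have hAbx : ∀ b ∈ Ly, A b x := fun b hb => (H_E3 b hb).1
  have hxppy : x ∉ Npp A y := (H_E2 a₀ ha₀Lx).2.1
  have H4 : ∀ a ∈ Lx, ∃ c ∈ Ly, A c x ∧ ¬ A c a ∧ a ∉ Npp A c :=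
    fun a ha => (H_E2 a ha).2.2
  have H5 : ∀ b ∈ Ly, ∃ c ∈ Lx, A y c ∧ ¬ A b c ∧ c ∉ Npp A b :=
    fun b hb => (H_E3 b hb).2.2
  -- the partition predicates
  set P : V → Prop := fun u => A x u ∧ u ≠ y with hPdef
  set Q : V → Prop := fun u => u ≠ x ∧ u ≠ y ∧ ¬ MissingEdge A x u ∧ ¬ MissingEdge A y u ∧ ¬ A x u
    with hQdef
  have hPx : ∀ p, P p → p ≠ x := fun p hp h => hirr x (h ▸ hp.1)
  have hPnLx : ∀ p, P p → p ∉ Lx := fun p hp h => h.2.1 hp.1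
  have hPnLy : ∀ p, P p → p ∉ Ly := fun p hp h => hnAxb p h hp.1
  have hQnLx : ∀ q, Q q → q ∉ Lx := fun q hq h => hq.2.2.1 h
  have hQnLy : ∀ q, Q q → q ∉ Ly := fun q hq h => hq.2.2.2.1 h
  -- not-missing between various classes
  have hnm_pb : ∀ p, P p → ∀ b ∈ Ly, ¬ MissingEdge A p b := by
    intro p hp b hb h
    rcases hM p b h with ⟨h1, _⟩ | ⟨h1, h2⟩ | ⟨h1, _⟩ | ⟨h1, h2⟩
    · exact hPx p hp h1
    · exact (hLyprop b hb).1 h1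
    · exact hp.2 h1
    · exact (hLyprop b hb).2 h1
  have hnm_pa : ∀ p, P p → ∀ a ∈ Lx, ¬ MissingEdge A p a := by
    intro p hp a ha h
    rcases hM p a h with ⟨h1, _⟩ | ⟨h1, _⟩ | ⟨h1, _⟩ | ⟨h1, h2⟩
    · exact hPx p hp h1
    · exact (hLxprop a ha).1 h1
    · exact hp.2 h1
    · exact (hLxprop a ha).2 h1
  have hnm_py : ∀ p, P p → ¬ MissingEdge A p y := by
    intro p hp h
    rcases hM p y h with ⟨h1, _⟩ | ⟨h1, _⟩ | ⟨h1, _⟩ | ⟨_, h2⟩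
    · exact hPx p hp h1
    · exact hxy h1.symm
    · exact hp.2 h1
    · exact hnAxb p h2 hp.1
  have hnm_ab : ∀ a ∈ Lx, ∀ b, b ∉ Lx → b ≠ x → b ≠ y → ¬ MissingEdge A a b := by
    intro a ha b hb1 hb2 hb3 h
    rcases hM a b h with ⟨h1, _⟩ | ⟨h1, _⟩ | ⟨h1, _⟩ | ⟨h1, h2⟩
    · exact (hLxprop a ha).1 h1
    · exact hb2 h1
    · exact (hLxprop a ha).2 h1
    · exact hb3 h1
  -- the chain D1, D2, D3
  have D1 : ∀ b ∈ Ly, ∀ p, P p → A b p := by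
    intro b hb p hp
    have hbne : b ≠ x := (hLyprop b hb).1
    have hnpb : ¬ A p b :=
      npp_avoid (hnppxb b hb) hbne (hnAxb b hb) p hp.1
    have hpb : p ≠ b := fun h => hnAxb b hb (h ▸ hp.1)
    exact hadj2 p b hpb (hnm_pb p hp b hb) hnpb
  have D2 : ∀ a ∈ Lx, ∀ p, P p → A a p := by
    intro a ha p hp
    obtain ⟨c, hc, hAcx, hnAca, haNc⟩ := H4 a ha
    have hane : a ≠ c := fun h => hLxLy a ha (h ▸ hc)
    have hnpa : ¬ A p a := npp_avoid haNc hane hnAca p (D1 c hc p hp)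
    have hpa : p ≠ a := fun h => ha.2.1 (h ▸ hp.1)
    exact hadj2 p a hpa (hnm_pa p hp a ha) hnpa
  have D3 : ∀ p, P p → A y p := by
    intro p hp
    have hnpy : ¬ A p y :=
      npp_avoid (hnppya a₀ ha₀Lx) (fun h => (hLxprop a₀ ha₀Lx).2 h.symm)
        (hnAay a₀ ha₀Lx) p (D2 a₀ ha₀Lx p hp)
    exact hadj2 p y hp.2 (hnm_py p hp) hnpy
  -- Q facts
  have NQ1 : ∀ q, Q q → A q x := by
    intro q hq
    exact hadj2 x q (fun h => hq.1 h.symm) hq.2.2.1 hq.2.2.2.2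
  have NQ2 : ∀ q, Q q → A q y := by
    intro q hq
    have hnyq : ¬ A y q := by
      intro h
      exact npp_avoid hxppy hxy hnAyx q h (NQ1 q hq)
    exact hadj2 y q (fun h => hq.2.1 h.symm) hq.2.2.2.1 hnyq
  have NQ3 : ∀ q, Q q → ∀ a ∈ Lx, A q a := by
    intro q hq a ha
    have hnaq : ¬ A a q := by
      intro h
      exact npp_avoid (hnppya a ha) (fun h' => (hLxprop a ha).2 h'.symm)
        (hnAay a ha) q h (NQ2 q hq)
    have hane : a ≠ q := fun h => hq.2.2.1 (h ▸ ha)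
    exact hadj2 a q hane
      (hnm_ab a ha q (hQnLx q hq) hq.1 hq.2.1) hnaq
  have NQ4 : ∀ q, Q q → ∀ b ∈ Ly, A q b := by
    intro q hq b hb
    obtain ⟨c, hc, _, hnAbc, hcNb⟩ := H5 b hb
    have hcb : c ≠ b := fun h => hLxLy c hc (h ▸ hb)
    have hnbq : ¬ A b q := by
      intro h
      exact npp_avoid hcNb hcb hnAbc q h (NQ3 q hq c hc)
    have hbq : b ≠ q := fun h => hq.2.2.2.1 (h ▸ hb)
    have hnm : ¬ MissingEdge A b q := by
      intro h
      rcases hM b q h with ⟨h1, _⟩ | ⟨h1, _⟩ | ⟨h1, _⟩ | ⟨h1, _⟩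
      · exact (hLyprop b hb).1 h1
      · exact hq.1 h1
      · exact (hLyprop b hb).2 h1
      · exact hq.2.1 h1
    exact hadj2 b q hbq hnm hnbq
  -- coverage
  have cover : ∀ u, u = x ∨ u = y ∨ u ∈ Lx ∨ u ∈ Ly ∨ P u ∨ Q u := by
    intro u
    by_cases h1 : u = x
    · exact Or.inl h1
    by_cases h2 : u = y
    · exact Or.inr (Or.inl h2)
    by_cases h3 : u ∈ Lx
    · exact Or.inr (Or.inr (Or.inl h3))
    by_cases h4 : u ∈ Ly
    · exact Or.inr (Or.inr (Or.inr (Or.inl h4)))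
    by_cases h5 : A x u
    · exact Or.inr (Or.inr (Or.inr (Or.inr (Or.inl ⟨h5, h2⟩))))
    · exact Or.inr (Or.inr (Or.inr (Or.inr (Or.inr ⟨h1, h2, h3, h4, h5⟩))))
  -- P-outs stay in P ∪ Q
  have N2 : ∀ p, P p → ∀ u, A p u → (P u ∨ Q u) := by
    intro p hp u hu
    rcases cover u with h | h | h | h | h | h
    · rw [h] at hu; exact absurd hu (hdig x p hp.1)
    · rw [h] at hu; exact absurd hu (hdig y p (D3 p hp))
    · exact absurd hu (hdig u p (D2 u h p hp))
    · exact absurd hu (hdig u p (D1 u h p hp))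
    · exact Or.inl h
    · exact Or.inr h
  -- the tournament S
  set S : Finset V := Finset.univ.filter (fun u => u = x ∨ P u ∨ Q u) with hSdef
  have hmemS : ∀ u, u ∈ S ↔ (u = x ∨ P u ∨ Q u) := by
    intro u; simp [hSdef]
  have hxS : x ∈ S := (hmemS x).mpr (Or.inl rfl)
  have hynS : y ∉ S := by
    intro h
    rcases (hmemS y).mp h with h1 | h1 | h1
    · exact hxy h1.symm
    · exact h1.2 rfl
    · exact h1.2.1 rfl
  have hLxnS : ∀ a ∈ Lx, a ∉ S := by
    intro a ha h
    rcases (hmemS a).mp h with h1 | h1 | h1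
    · exact (hLxprop a ha).1 h1
    · exact hPnLx a h1 ha
    · exact hQnLx a h1 ha
  have hLynS : ∀ b ∈ Ly, b ∉ S := by
    intro b hb h
    rcases (hmemS b).mp h with h1 | h1 | h1
    · exact (hLyprop b hb).1 h1
    · exact hPnLy b h1 hb
    · exact hQnLy b h1 hb
  have htotS : ∀ u ∈ S, ∀ v ∈ S, u ≠ v → A u v ∨ A v u := by
    intro u hu v hv hne
    by_cases h : A u v
    · exact Or.inl h
    refine Or.inr (hadj2 u v hne ?_ h)
    intro hm
    rcases hM u v hm with ⟨h1, h2⟩ | ⟨h1, h2⟩ | ⟨h1, h2⟩ | ⟨h1, h2⟩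
    · exact hLxnS v h2 hv
    · exact hLxnS u h2 hu
    · exact hLynS v h2 hv
    · exact hLynS u h2 hu
  -- B and the weight
  set B : Set V := ({x, y} ∪ Lx ∪ Ly : Set V) with hBdef
  have hBmem : ∀ u, u ∈ B ↔ (u = x ∨ u = y ∨ u ∈ Lx ∨ u ∈ Ly) := by
    intro u
    simp [hBdef, Set.mem_union, Set.mem_insert_iff, or_assoc]
  set m : ℕ := B.ncard with hmdef
  have hmpos : 0 < m := by
    rw [hmdef]
    rw [Set.ncard_pos (Set.toFinite B)]
    exact ⟨x, (hBmem x).mpr (Or.inl rfl)⟩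
  set w : V → ℕ := fun u => if u = x then m else 1 with hwdef
  have hw : ∀ u, 0 < w u := by
    intro u
    simp only [hwdef]
    split_ifs
    · exact hmpos
    · exact Nat.one_pos
  -- weight sum helpers
  have wsum_no_x : ∀ F : Finset V, x ∉ F → ∑ u ∈ F, w u = F.card := by
    intro F hF
    rw [show F.card = ∑ _u ∈ F, 1 from (Finset.card_eq_sum_ones F)]
    apply Finset.sum_congr rfl
    intro u hu
    simp only [hwdef]
    rw [if_neg (show u ≠ x from fun h => hF (h ▸ hu))]
  have wsum_x : ∀ F : Finset V, x ∈ F → ∑ u ∈ F, w u = m + (F.erase x).card := by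
    intro F hF
    rw [← Finset.add_sum_erase F w hF, wsum_no_x (F.erase x) (Finset.notMem_erase x F)]
    simp only [hwdef, if_pos rfl]
  -- apply weighted HT
  obtain ⟨f, hfS, hsum⟩ := weighted_HT A w S ⟨x, hxS⟩ (fun u _ => hirr u) htotS hdig hw
  set GSfin : Finset V := S.filter (fun u => A f u) with hGSdef
  set NSfin : Finset V := S.filter (fun u => u ≠ f ∧ ¬ A f u ∧ ∃ v ∈ S, A f v ∧ A v u)
    with hNSdef
  have hsum' : ∑ u ∈ GSfin, w u ≤ ∑ u ∈ NSfin, w u := hsum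
  have hxNS : ∀ hx : x ∈ GSfin, x ∉ NSfin := by
    intro hx h
    exact ((Finset.mem_filter.mp h).2.2.1 ((Finset.mem_filter.mp hx).2))
  have hNSsub : ∀ u ∈ NSfin, u ∈ Npp A f := by
    intro u hu
    obtain ⟨_, h1, h2, v, _, h3, h4⟩ := Finset.mem_filter.mp hu
    exact ⟨h1, h2, v, h3, h4⟩
  have hBfin : B.Finite := Set.toFinite B
  -- case analysis on f
  rcases (hmemS f).mp hfS with rfl | hPf | hQf
  · -- f = x (note: `x` has been substituted by `f` everywhere)
    refine ⟨f, ?_⟩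
    have hxG : f ∉ GSfin := fun h => hirr f (Finset.mem_filter.mp h).2
    have hxN : f ∉ NSfin := fun h => (Finset.mem_filter.mp h).2.1 rfl
    rw [wsum_no_x GSfin hxG, wsum_no_x NSfin hxN] at hsum'
    have hNp : Nplus A f = insert y (↑GSfin : Set V) := by
      ext u
      simp only [Nplus, Set.mem_setOf_eq, Set.mem_insert_iff, Finset.mem_coe]
      constructor
      · intro h
        by_cases hy : u = y
        · exact Or.inl hy
        · exact Or.inr (Finset.mem_filter.mpr
            ⟨(hmemS u).mpr (Or.inr (Or.inl ⟨h, hy⟩)), h⟩)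
      · rintro (rfl | h)
        · exact hxyArc
        · exact (Finset.mem_filter.mp h).2
    have hyG : y ∉ (↑GSfin : Set V) := fun h => hynS (Finset.mem_filter.mp h).1
    have hNpcard : (Nplus A f).ncard = GSfin.card + 1 := by
      rw [hNp, Set.ncard_insert_of_notMem hyG (Set.toFinite _), Set.ncard_coe_finset]
    have hsub : Lx ∪ (↑NSfin : Set V) ⊆ Npp A f := by
      rintro u (hu | hu)
      · exact ⟨(hLxprop u hu).1, hu.2.1, y, hxyArc, hyLx u hu⟩
      · exact hNSsub u hu
    have hdisj : Disjoint Lx (↑NSfin : Set V) := by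
      rw [Set.disjoint_left]
      intro a ha h
      exact hLxnS a ha (Finset.mem_filter.mp h).1
    have hLxpos : 1 ≤ Lx.ncard := by
      rw [Nat.one_le_iff_ne_zero, ← Nat.pos_iff_ne_zero, Set.ncard_pos (Set.toFinite _)]
      exact ⟨a₀, ha₀Lx⟩
    have hNppcard : GSfin.card + 1 ≤ (Npp A f).ncard := by
      calc GSfin.card + 1 ≤ Lx.ncard + NSfin.card := by omega
        _ = (Lx ∪ (↑NSfin : Set V)).ncard := by
            rw [Set.ncard_union_eq hdisj (Set.toFinite _) (Set.toFinite _),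
              Set.ncard_coe_finset]
        _ ≤ (Npp A f).ncard := Set.ncard_le_ncard hsub (Set.toFinite _)
    rw [SNP, hNpcard]
    exact hNppcard
  · -- f ∈ P
    refine ⟨f, ?_⟩
    have hxG : x ∉ GSfin := fun h => hdig x f hPf.1 (Finset.mem_filter.mp h).2
    rw [wsum_no_x GSfin hxG] at hsum'
    have hNp : Nplus A f = (↑GSfin : Set V) := by
      ext u
      simp only [Nplus, Set.mem_setOf_eq, Finset.mem_coe]
      constructor
      · intro h
        rcases N2 f hPf u h with h1 | h1
        · exact Finset.mem_filter.mpr ⟨(hmemS u).mpr (Or.inr (Or.inl h1)), h⟩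
        · exact Finset.mem_filter.mpr ⟨(hmemS u).mpr (Or.inr (Or.inr h1)), h⟩
      · exact fun h => (Finset.mem_filter.mp h).2
    have hNpcard : (Nplus A f).ncard = GSfin.card := by
      rw [hNp, Set.ncard_coe_finset]
    have hfnB : f ∉ B := by
      intro h
      rcases (hBmem f).mp h with h1 | h1 | h1 | h1
      · exact hPx f hPf h1
      · exact hPf.2 h1
      · exact hPnLx f hPf h1
      · exact hPnLy f hPf h1
    by_cases hxN : x ∈ NSfin
    · -- x is a second neighbor within S: big gain
      rw [wsum_x NSfin hxN] at hsum'
      obtain ⟨_, _, hnAfx, v, hvS, hAfv, hAvx⟩ := Finset.mem_filter.mp hxN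
      have hQv : Q v := by
        rcases (hmemS v).mp hvS with hvx | h1 | h1
        · rw [hvx] at hAfv; exact absurd hAfv hnAfx
        · exact absurd hAvx (hdig x v h1.1)
        · exact h1
      have hBsub : B ⊆ Npp A f := by
        intro u hu
        have hne : u ≠ f := fun h => hfnB (h ▸ hu)
        have hnAfu : ¬ A f u := by
          rcases (hBmem u).mp hu with h1 | h1 | h1 | h1
          · rw [h1]; exact hnAfx
          · rw [h1]; exact hdig y f (D3 f hPf)
          · exact hdig u f (D2 u h1 f hPf)
          · exact hdig u f (D1 u h1 f hPf)
        refine ⟨hne, hnAfu, v, hAfv, ?_⟩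
        rcases (hBmem u).mp hu with h1 | h1 | h1 | h1
        · rw [h1]; exact hAvx
        · rw [h1]; exact NQ2 v hQv
        · exact NQ3 v hQv u h1
        · exact NQ4 v hQv u h1
      have hsub : B ∪ (↑(NSfin.erase x) : Set V) ⊆ Npp A f := by
        rintro u (hu | hu)
        · exact hBsub hu
        · exact hNSsub u (Finset.mem_of_mem_erase hu)
      have hdisj : Disjoint B (↑(NSfin.erase x) : Set V) := by
        rw [Set.disjoint_left]
        intro u hu h
        have huS : u ∈ S := (Finset.mem_filter.mp (Finset.mem_of_mem_erase h)).1
        have hunx : u ≠ x := Finset.ne_of_mem_erase h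
        rcases (hBmem u).mp hu with h1 | h1 | h1 | h1
        · exact hunx h1
        · rw [h1] at huS; exact hynS huS
        · exact hLxnS u h1 huS
        · exact hLynS u h1 huS
      calc (Nplus A f).ncard = GSfin.card := hNpcard
        _ ≤ m + (NSfin.erase x).card := hsum'
        _ = (B ∪ (↑(NSfin.erase x) : Set V)).ncard := by
            rw [Set.ncard_union_eq hdisj hBfin (Set.toFinite _), Set.ncard_coe_finset,
              hmdef]
        _ ≤ (Npp A f).ncard := Set.ncard_le_ncard hsub (Set.toFinite _)
    · rw [wsum_no_x NSfin hxN] at hsum'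
      have hsub : (↑NSfin : Set V) ⊆ Npp A f := fun u hu => hNSsub u hu
      calc (Nplus A f).ncard = GSfin.card := hNpcard
        _ ≤ NSfin.card := hsum'
        _ = (↑NSfin : Set V).ncard := (Set.ncard_coe_finset _).symm
        _ ≤ (Npp A f).ncard := Set.ncard_le_ncard hsub (Set.toFinite _)
  · -- f ∈ Q
    refine ⟨f, ?_⟩
    have hAfx : A f x := NQ1 f hQf
    have hxG : x ∈ GSfin := Finset.mem_filter.mpr ⟨hxS, hAfx⟩
    rw [wsum_x GSfin hxG] at hsum'
    have hxN : x ∉ NSfin := hxNS hxG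
    rw [wsum_no_x NSfin hxN] at hsum'
    have hNp : Nplus A f = B ∪ (↑(GSfin.erase x) : Set V) := by
      ext u
      simp only [Nplus, Set.mem_setOf_eq, Set.mem_union, Finset.mem_coe]
      constructor
      · intro h
        rcases cover u with h1 | h1 | h1 | h1 | h1 | h1
        · exact Or.inl ((hBmem u).mpr (Or.inl h1))
        · exact Or.inl ((hBmem u).mpr (Or.inr (Or.inl h1)))
        · exact Or.inl ((hBmem u).mpr (Or.inr (Or.inr (Or.inl h1))))
        · exact Or.inl ((hBmem u).mpr (Or.inr (Or.inr (Or.inr h1))))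
        · refine Or.inr (Finset.mem_erase.mpr ⟨hPx u h1, ?_⟩)
          exact Finset.mem_filter.mpr ⟨(hmemS u).mpr (Or.inr (Or.inl h1)), h⟩
        · refine Or.inr (Finset.mem_erase.mpr ⟨h1.1, ?_⟩)
          exact Finset.mem_filter.mpr ⟨(hmemS u).mpr (Or.inr (Or.inr h1)), h⟩
      · rintro (hu | hu)
        · rcases (hBmem u).mp hu with h1 | h1 | h1 | h1
          · rw [h1]; exact hAfx
          · rw [h1]; exact NQ2 f hQf
          · exact NQ3 f hQf u h1
          · exact NQ4 f hQf u h1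
        · exact (Finset.mem_filter.mp (Finset.mem_of_mem_erase hu)).2
    have hdisj : Disjoint B (↑(GSfin.erase x) : Set V) := by
      rw [Set.disjoint_left]
      intro u hu h
      have huS : u ∈ S := (Finset.mem_filter.mp (Finset.mem_of_mem_erase h)).1
      have hunx : u ≠ x := Finset.ne_of_mem_erase h
      rcases (hBmem u).mp hu with h1 | h1 | h1 | h1
      · exact hunx h1
      · rw [h1] at huS; exact hynS huS
      · exact hLxnS u h1 huS
      · exact hLynS u h1 huS
    have hNpcard : (Nplus A f).ncard = m + (GSfin.erase x).card := by
      rw [hNp, Set.ncard_union_eq hdisj hBfin (Set.toFinite _), Set.ncard_coe_finset, hmdef]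
    have hsub : (↑NSfin : Set V) ⊆ Npp A f := fun u hu => hNSsub u hu
    calc (Nplus A f).ncard = m + (GSfin.erase x).card := hNpcard
      _ ≤ NSfin.card := hsum'
      _ = (↑NSfin : Set V).ncard := (Set.ncard_coe_finset _).symm
      _ ≤ (Npp A f).ncard := Set.ncard_le_ncard hsub (Set.toFinite _)

end Main

end App

/-- a digraph obtained from a tournament by deleting the edges of
two disjoint stars (centers `x`, `y`), in which every missing edge has positive
in-degree and positive out-degree in the dependency digraph, has a vertex with
the SNP. -/
theorem tournament_minus_two_stars_SNP [Fintype V]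
    (A : V → V → Prop) (hA : NoDigons A)
    (x y : V) (hxy : x ≠ y) (hadj : A x y ∨ A y x)
    -- the missing graph is the disjoint union of two stars with centers x and y:
    (hStar : ∀ u v, MissingEdge A u v → u = x ∨ v = x ∨ u = y ∨ v = y)
    (hDisj : ∀ v, ¬ (MissingEdge A v x ∧ MissingEdge A v y))
    (hxLeaf : ∃ a, MissingEdge A x a) (hyLeaf : ∃ b, MissingEdge A y b)
    -- δ(Δ) > 0:
    (hIndeg : ∀ u v, MissingEdge A u v → ∃ e : Sym2 V, EdgeLoses A e s(u, v))
    (hOutdeg : ∀ u v, MissingEdge A u v → ∃ e : Sym2 V, EdgeLoses A s(u, v) e) :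
    ∃ v : V, SNP A v := by
  rcases hadj with h | h
  · exact main_lemma A hA x y hxy h hStar hDisj hxLeaf hyLeaf hIndeg hOutdeg
  · refine main_lemma A hA y x hxy.symm h ?_ ?_ hyLeaf hxLeaf hIndeg hOutdeg
    · intro u v hm
      rcases hStar u v hm with h1 | h1 | h1 | h1
      · exact Or.inr (Or.inr (Or.inl h1))
      · exact Or.inr (Or.inr (Or.inr h1))
      · exact Or.inl h1
      · exact Or.inr (Or.inl h1)
    · intro v hv
      exact hDisj v ⟨hv.2, hv.1⟩
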